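/- For every formal power series h over ℝ in the variable X, there exist a unique λ ∈ ℝ and a unique formal power series a over ℝ whose coefficient of X is 0 such that h = λ·X + X·(Da) − a, where D denotes the formal derivative. (The second cohomology of the rotation-invariant (zero Fourier mode) part of the Poisson complex of the formal neighborhood of the necklace is one-dimensional, spanned by the class of π_c = I ∂_I∧∂_θ itself.) -/

import Mathlib

open PowerSeries

private lemma rhs_coeff (l : ℝ) (a : PowerSeries ℝ) (n : ℕ) :
    coeff (n+1) (C l * X + X * derivative ℝ a - a) =
      (if n = 0 then l else 0) + (n : ℝ) * coeff (n+1) a := by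
  rw [map_sub, map_add, coeff_C_mul, coeff_X, coeff_succ_X_mul, coeff_derivative]
  by_cases hn : n = 0
  · subst hn; norm_num
  · rw [if_neg (by omega), if_neg hn]
    ring

private lemma rhs_coeff0 (l : ℝ) (a : PowerSeries ℝ) :
    coeff 0 (C l * X + X * derivative ℝ a - a) = - coeff 0 a := by
  rw [map_sub, map_add, coeff_C_mul, coeff_X, coeff_zero_X_mul]
  simp

theorem formal_mode_zero_H2 (h : PowerSeries ℝ) :
    ∃! la : ℝ × PowerSeries ℝ,
      coeff 1 la.2 = 0 ∧
      h = C la.1 * X + X * derivative ℝ la.2 - la.2 := by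
  set a : PowerSeries ℝ := PowerSeries.mk fun n =>
    if n = 0 then -coeff 0 h else if n = 1 then 0 else coeff n h / ((n : ℝ) - 1) with ha
  refine ⟨(coeff 1 h, a), ⟨by simp [ha], ?_⟩, ?_⟩
  · ext n
    cases n with
    | zero => simp [rhs_coeff0, ha]
    | succ m =>
      rw [rhs_coeff]
      cases m with
      | zero => simp [ha]
      | succ k =>
        have hk : ((k:ℝ) + 1) ≠ 0 := by positivity
        simp only [ha, coeff_mk, if_neg (Nat.succ_ne_zero _), if_neg (Nat.succ_ne_zero k),
          Nat.succ_ne_succ.mpr (Nat.succ_ne_zero k)]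
        push_cast
        field_simp
        ring
  · rintro ⟨m, b⟩ ⟨hb1, heq⟩
    simp only at hb1 heq
    have hcoeff : ∀ n, coeff (n+1) h = (if n = 0 then m else 0) + (n:ℝ) * coeff (n+1) b := by
      intro n; rw [heq, rhs_coeff]
    have hm : m = coeff 1 h := by
      have := hcoeff 0; simpa using this.symm
    have hb : b = a := by
      ext n
      cases n with
      | zero =>
        have := congrArg (coeff 0) heq
        rw [rhs_coeff0] at this
        simp only [ha, coeff_mk]; norm_num
        simp only [coeff_zero_eq_constantCoeff] at this; linarith
      | succ k =>
        cases k with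
        | zero => simp [ha, hb1]
        | succ j =>
          have := hcoeff (j+1)
          rw [if_neg (Nat.succ_ne_zero j)] at this
          simp only [ha, coeff_mk, if_neg (Nat.succ_ne_zero _),
            Nat.succ_ne_succ.mpr (Nat.succ_ne_zero j), if_neg]
          have hj : ((j:ℝ) + 1) ≠ 0 := by positivity
          push_cast at this ⊢
          field_simp
          linarith
    rw [hm, hb]
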